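/- For α ∈ (0,1), the function t ↦ sinh(αt)/sinh(t) (extended by its limit α at t=0) is positive definite on ℝ. -/

import Mathlib

/-- A continuous function `h : ℝ → ℝ` is positive definite if for all finite families
`t : Fin d → ℝ`, the matrix `[h (t i - t j)]` is positive semi-definite. -/
def IsPosDefFn (h : ℝ → ℝ) : Prop :=
  Continuous h ∧
    ∀ (d : ℕ) (t : Fin d → ℝ), (Matrix.of fun i j => h (t i - t j)).PosSemidef

namespace Stmt7Aux

open Real MeasureTheory Set Filter

lemma exp_cos_integrable (c t : ℝ) (hc : 0 < c) :
    IntegrableOn (fun u : ℝ => Real.exp (-c * u) * Real.cos (t * u)) (Ioi 0) := by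
  refine (exp_neg_integrableOn_Ioi 0 hc).mono' ?_ ?_
  · exact ((Real.continuous_exp.comp (continuous_const.mul continuous_id)).mul
      (Real.continuous_cos.comp (continuous_const.mul continuous_id))).aestronglyMeasurable
  · filter_upwards with u
    rw [norm_mul, Real.norm_eq_abs, Real.norm_eq_abs]
    calc |Real.exp (-c*u)| * |Real.cos (t*u)| ≤ |Real.exp (-c*u)| * 1 :=
          mul_le_mul_of_nonneg_left (Real.abs_cos_le_one _) (abs_nonneg _)
      _ = Real.exp (-c*u) := by rw [mul_one, abs_of_pos (Real.exp_pos _)]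

lemma exp_tendsto_zero (c : ℝ) (hc : 0 < c) :
    Tendsto (fun u : ℝ => Real.exp (-c * u)) atTop (nhds 0) := by
  simp only [neg_mul]
  exact Real.tendsto_exp_neg_atTop_nhds_zero.comp (Tendsto.const_mul_atTop hc tendsto_id)

lemma integral_exp_cos (c t : ℝ) (hc : 0 < c) :
    ∫ u in Ioi (0:ℝ), Real.exp (-c * u) * Real.cos (t * u) = c / (c^2 + t^2) := by
  have hden : 0 < c^2 + t^2 := by positivity
  set F : ℝ → ℝ := fun u => Real.exp (-c*u) * (t * Real.sin (t*u) - c * Real.cos (t*u)) / (c^2+t^2) with hF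
  have hderiv : ∀ u : ℝ, HasDerivAt F (Real.exp (-c*u) * Real.cos (t*u)) u := by
    intro u
    have h1 : HasDerivAt (fun u : ℝ => Real.exp (-c*u)) (-c * Real.exp (-c*u)) u := by
      simpa [mul_comm] using (((hasDerivAt_id u).const_mul (-c)).exp)
    have hs : HasDerivAt (fun u : ℝ => Real.sin (t*u)) (Real.cos (t*u) * t) u := by
      simpa using ((hasDerivAt_id u).const_mul t).sin
    have hcc : HasDerivAt (fun u : ℝ => Real.cos (t*u)) (-Real.sin (t*u) * t) u := by
      simpa using ((hasDerivAt_id u).const_mul t).cos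
    have h2 := ((hs.const_mul t).sub (hcc.const_mul c))
    have := (h1.mul h2).div_const (c^2+t^2)
    refine this.congr_deriv ?_
    simp only [Pi.sub_apply]
    field_simp
    ring
  have htend : Tendsto F atTop (nhds 0) := by
    refine squeeze_zero_norm (a := fun u : ℝ => Real.exp (-c*u) * ((|t|+|c|)/(c^2+t^2))) (fun u => ?_) ?_
    · 
      rw [hF]
      simp only [Real.norm_eq_abs, abs_div, abs_mul, abs_of_pos hden,
        abs_of_pos (Real.exp_pos (-c*u)), div_le_iff₀ hden]
      have hb : |t * Real.sin (t*u) - c * Real.cos (t*u)| ≤ |t| + |c| := by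
        calc |t * Real.sin (t*u) - c * Real.cos (t*u)|
            ≤ |t * Real.sin (t*u)| + |c * Real.cos (t*u)| := abs_sub _ _
          _ ≤ |t| * 1 + |c| * 1 := by
              rw [abs_mul, abs_mul]
              gcongr
              · exact Real.abs_sin_le_one _
              · exact Real.abs_cos_le_one _
          _ = |t| + |c| := by ring
      calc Real.exp (-c*u) * |t * Real.sin (t*u) - c * Real.cos (t*u)|
          ≤ Real.exp (-c*u) * (|t|+|c|) := by gcongr
        _ = Real.exp (-c*u) * ((|t|+|c|)/(c^2+t^2)) * (c^2+t^2) := by field_simp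
    · simpa using (exp_tendsto_zero c hc).mul_const ((|t|+|c|)/(c^2+t^2))
  have key := integral_Ioi_of_hasDerivAt_of_tendsto
    (f := F) (f' := fun u => Real.exp (-c*u) * Real.cos (t*u)) (a := 0)
    ((hderiv 0).continuousAt.continuousWithinAt) (fun x _ => (hderiv x))
    (exp_cos_integrable c t hc) htend
  rw [key, hF]
  norm_num
  ring

def PDK (f : ℝ → ℝ) : Prop :=
  ∀ (d : ℕ) (t x : Fin d → ℝ), 0 ≤ ∑ i, ∑ j, x i * x j * f (t i - t j)

lemma pdk_const {a : ℝ} (ha : 0 ≤ a) : PDK (fun _ => a) := by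
  intro d t x
  have : ∑ i, ∑ j, x i * x j * a = a * ((∑ i, x i) * (∑ j, x j)) := by
    rw [Finset.sum_mul_sum, Finset.mul_sum]
    refine Finset.sum_congr rfl fun i _ => ?_
    rw [Finset.mul_sum]
    exact Finset.sum_congr rfl fun j _ => by ring
  rw [this, ← sq]
  positivity

lemma pdk_add {f g : ℝ → ℝ} (hf : PDK f) (hg : PDK g) : PDK (fun s => f s + g s) := by
  intro d t x
  have : ∑ i, ∑ j, x i * x j * (f (t i - t j) + g (t i - t j))
      = (∑ i, ∑ j, x i * x j * f (t i - t j)) + ∑ i, ∑ j, x i * x j * g (t i - t j) := by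
    rw [← Finset.sum_add_distrib]
    refine Finset.sum_congr rfl fun i _ => ?_
    rw [← Finset.sum_add_distrib]
    exact Finset.sum_congr rfl fun j _ => by ring
  rw [this]
  exact add_nonneg (hf d t x) (hg d t x)

lemma pdk_smul {f : ℝ → ℝ} {a : ℝ} (ha : 0 ≤ a) (hf : PDK f) : PDK (fun s => a * f s) := by
  intro d t x
  have : ∑ i, ∑ j, x i * x j * (a * f (t i - t j))
      = a * ∑ i, ∑ j, x i * x j * f (t i - t j) := by
    rw [Finset.mul_sum]
    refine Finset.sum_congr rfl fun i _ => ?_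
    rw [Finset.mul_sum]
    exact Finset.sum_congr rfl fun j _ => by ring
  rw [this]
  exact mul_nonneg ha (hf d t x)

lemma pdk_cauchy {c : ℝ} (hc : 0 < c) : PDK (fun s => c^2 / (c^2 + s^2)) := by
  intro d t x
  have hInt : ∀ i j : Fin d,
      Integrable (fun u : ℝ => x i * x j * c * (Real.exp (-c*u) * Real.cos ((t i - t j)*u)))
        (volume.restrict (Ioi 0)) :=
    fun i j => (exp_cos_integrable c _ hc).const_mul _
  have swap : ∑ i, ∑ j, x i * x j * (c^2 / (c^2 + (t i - t j)^2))
      = ∫ u in Ioi (0:ℝ), ∑ i, ∑ j, x i * x j * c * (Real.exp (-c*u) * Real.cos ((t i - t j)*u)) := by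
    rw [integral_finset_sum _ (fun i _ => integrable_finset_sum _ (fun j _ => hInt i j))]
    refine Finset.sum_congr rfl fun i _ => ?_
    rw [integral_finset_sum _ (fun j _ => hInt i j)]
    refine Finset.sum_congr rfl fun j _ => ?_
    rw [integral_const_mul, integral_exp_cos c _ hc]
    have h0 : c^2 + (t i - t j)^2 ≠ 0 := by positivity
    field_simp
  rw [swap]
  refine integral_nonneg fun u => ?_
  have key : ∑ i, ∑ j, x i * x j * c * (Real.exp (-c*u) * Real.cos ((t i - t j)*u))
      = c * Real.exp (-c*u) *
        ((∑ i, x i * Real.cos (t i * u))^2 + (∑ i, x i * Real.sin (t i * u))^2) := by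
    rw [sq, sq, Finset.sum_mul_sum, Finset.sum_mul_sum, ← Finset.sum_add_distrib,
      Finset.mul_sum]
    refine Finset.sum_congr rfl fun i _ => ?_
    rw [← Finset.sum_add_distrib, Finset.mul_sum]
    refine Finset.sum_congr rfl fun j _ => ?_
    rw [sub_mul, Real.cos_sub]
    ring
  rw [key]
  positivity

lemma pdk_mul {f g : ℝ → ℝ} (hf : PDK f) (hfe : ∀ s, f (-s) = f s) (hg : PDK g) :
    PDK (fun s => f s * g s) := by
  intro d t x
  classical
  set M : Matrix (Fin d) (Fin d) ℝ := Matrix.of fun i j => f (t i - t j) with hM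
  have hMpsd : M.PosSemidef := by
    refine Matrix.posSemidef_iff_dotProduct_mulVec.mpr ⟨?_, ?_⟩
    · ext i j
      simp only [Matrix.conjTranspose_apply, hM, Matrix.of_apply, star_trivial]
      rw [← hfe (t j - t i), neg_sub]
    · intro y
      have : dotProduct (star y) (M.mulVec y) = ∑ i, ∑ j, y i * y j * f (t i - t j) := by
        simp only [dotProduct, Matrix.mulVec, star_trivial, hM, Matrix.of_apply,
          Finset.mul_sum]
        exact Finset.sum_congr rfl fun i _ => Finset.sum_congr rfl fun j _ => by ring
      rw [this]
      exact hf d t y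
  obtain ⟨B, hB⟩ : ∃ B : Matrix (Fin d) (Fin d) ℝ, M = B.conjTranspose * B := by
    open scoped MatrixOrder in
    obtain ⟨B, hB⟩ := CStarAlgebra.nonneg_iff_eq_star_mul_self.mp hMpsd.nonneg
    exact ⟨B, hB⟩
  have hfB : ∀ i j, f (t i - t j) = ∑ k, B k i * B k j := by
    intro i j
    have : M i j = (B.conjTranspose * B) i j := by rw [← hB]
    simpa [Matrix.mul_apply, hM] using this
  show 0 ≤ ∑ i, ∑ j, x i * x j * (f (t i - t j) * g (t i - t j))
  have key : ∑ i, ∑ j, x i * x j * (f (t i - t j) * g (t i - t j))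
      = ∑ k, ∑ i, ∑ j, (x i * B k i) * (x j * B k j) * g (t i - t j) :=
    calc ∑ i, ∑ j, x i * x j * (f (t i - t j) * g (t i - t j))
        = ∑ i, ∑ j, ∑ k, (x i * B k i) * (x j * B k j) * g (t i - t j) := by
          refine Finset.sum_congr rfl fun i _ => Finset.sum_congr rfl fun j _ => ?_
          rw [hfB i j, Finset.sum_mul, Finset.mul_sum]
          exact Finset.sum_congr rfl fun k _ => by ring
      _ = ∑ i, ∑ k, ∑ j, (x i * B k i) * (x j * B k j) * g (t i - t j) :=
          Finset.sum_congr rfl fun i _ => Finset.sum_comm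
      _ = ∑ k, ∑ i, ∑ j, (x i * B k i) * (x j * B k j) * g (t i - t j) := Finset.sum_comm
  rw [key]
  exact Finset.sum_nonneg fun k _ => hg d t fun i => x i * B k i

lemma pdk_limit {F : ℕ → ℝ → ℝ} {f : ℝ → ℝ} (hF : ∀ n, PDK (F n))
    (h : ∀ s, Tendsto (fun n => F n s) atTop (nhds (f s))) : PDK f := by
  intro d t x
  have ht : Tendsto (fun n => ∑ i, ∑ j, x i * x j * F n (t i - t j)) atTop
      (nhds (∑ i, ∑ j, x i * x j * f (t i - t j))) := by
    refine tendsto_finset_sum _ fun i _ => tendsto_finset_sum _ fun j _ => ?_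
    exact (h (t i - t j)).const_mul _
  exact ge_of_tendsto' ht fun n => hF n d t x

lemma sinh_euler (t : ℝ) :
    Tendsto (fun n : ℕ => t * ∏ j ∈ Finset.range n, (1 + t^2/(π^2*((j:ℝ)+1)^2)))
      atTop (nhds (Real.sinh t)) := by
  have hπ : (π:ℂ) ≠ 0 := by exact_mod_cast Real.pi_ne_zero
  have h := Complex.tendsto_euler_sin_prod (↑t * Complex.I / ↑π)
  have heq : ∀ n : ℕ, (π:ℂ) * (↑t * Complex.I / ↑π) *
        ∏ j ∈ Finset.range n, (1 - (↑t * Complex.I / ↑π)^2 / ((j:ℂ)+1)^2)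
      = ((t * ∏ j ∈ Finset.range n, (1 + t^2/(π^2*((j:ℝ)+1)^2)) : ℝ) : ℂ) * Complex.I := by
    intro n
    have h1 : (π:ℂ) * (↑t * Complex.I / ↑π) = ↑t * Complex.I := by
      field_simp
    have h2 : ∀ j : ℕ, (1:ℂ) - (↑t * Complex.I / ↑π)^2 / ((j:ℂ)+1)^2
        = ((1 + t^2/(π^2*((j:ℝ)+1)^2) : ℝ) : ℂ) := by
      intro j
      have hj : ((j:ℂ)+1) ≠ 0 := by
        have := Nat.cast_add_one_ne_zero (R := ℂ) j
        exact_mod_cast this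
      push_cast
      rw [div_pow, mul_pow, Complex.I_sq]
      field_simp
      ring
    rw [h1, Finset.prod_congr rfl fun j _ => h2 j]
    push_cast
    ring
  have hsin : Complex.sin (↑π * (↑t * Complex.I / ↑π)) = ((Real.sinh t : ℝ) : ℂ) * Complex.I := by
    have h1 : (π:ℂ) * (↑t * Complex.I / ↑π) = ↑t * Complex.I := by field_simp
    rw [h1, Complex.sin_mul_I, Complex.ofReal_sinh]
  rw [funext heq, hsin] at h
  have := (Complex.continuous_im.tendsto _).comp h
  simp only [Complex.mul_I_im, Complex.ofReal_re] at this
  refine this.congr fun n => ?_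
  simp only [Function.comp_apply, Complex.mul_I_im, Complex.ofReal_re]

lemma tendsto_ratio (α : ℝ) (hα : α ∈ Set.Ioo (0:ℝ) 1) (s : ℝ) :
    Tendsto (fun n : ℕ => α * ∏ j ∈ Finset.range n,
        (α^2 + (1-α^2) * ((π*((j:ℝ)+1))^2 / ((π*((j:ℝ)+1))^2 + s^2))))
      atTop (nhds (if s = 0 then α else Real.sinh (α * s) / Real.sinh s)) := by
  obtain ⟨hα0, hα1⟩ := hα
  by_cases hs : s = 0
  · subst hs
    simp only [if_pos rfl]
    have : ∀ n : ℕ, α * ∏ j ∈ Finset.range n,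
        (α^2 + (1-α^2) * ((π*((j:ℝ)+1))^2 / ((π*((j:ℝ)+1))^2 + (0:ℝ)^2))) = α := by
      intro n
      have : ∀ j : ℕ, α^2 + (1-α^2) * ((π*((j:ℝ)+1))^2 / ((π*((j:ℝ)+1))^2 + (0:ℝ)^2)) = 1 := by
        intro j
        have hc : (π*((j:ℝ)+1))^2 ≠ 0 := by positivity
        rw [show (0:ℝ)^2 = 0 by norm_num, add_zero, div_self hc]
        ring
      rw [Finset.prod_congr rfl fun j _ => this j, Finset.prod_const_one, mul_one]
    rw [funext this]
    exact tendsto_const_nhds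
  · simp only [if_neg hs]
    have hQpos : ∀ j : ℕ, (0:ℝ) < 1 + s^2/(π^2*((j:ℝ)+1)^2) := by
      intro j; positivity
    have hsinh_ne : Real.sinh s ≠ 0 := by
      rw [Real.sinh_ne_zero]; exact hs
    have hN := sinh_euler (α * s)
    have hD := sinh_euler s
    have key : ∀ n : ℕ, α * ∏ j ∈ Finset.range n,
          (α^2 + (1-α^2) * ((π*((j:ℝ)+1))^2 / ((π*((j:ℝ)+1))^2 + s^2)))
        = ((α*s) * ∏ j ∈ Finset.range n, (1 + (α*s)^2/(π^2*((j:ℝ)+1)^2)))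
          / (s * ∏ j ∈ Finset.range n, (1 + s^2/(π^2*((j:ℝ)+1)^2))) := by
      intro n
      have hDn : s * ∏ j ∈ Finset.range n, (1 + s^2/(π^2*((j:ℝ)+1)^2)) ≠ 0 := by
        refine mul_ne_zero hs (ne_of_gt (Finset.prod_pos fun j _ => hQpos j))
      rw [eq_div_iff hDn]
      have hfac : ∀ j : ℕ,
          (α^2 + (1-α^2) * ((π*((j:ℝ)+1))^2 / ((π*((j:ℝ)+1))^2 + s^2)))
            * (1 + s^2/(π^2*((j:ℝ)+1)^2))
          = 1 + (α*s)^2/(π^2*((j:ℝ)+1)^2) := by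
        intro j
        have hc : (0:ℝ) < (π*((j:ℝ)+1))^2 := by positivity
        have hcs : (0:ℝ) < (π*((j:ℝ)+1))^2 + s^2 := by positivity
        have hc2 : (π:ℝ)^2*((j:ℝ)+1)^2 = (π*((j:ℝ)+1))^2 := by ring
        rw [hc2]
        field_simp
        ring
      calc α * (∏ j ∈ Finset.range n, (α^2 + (1-α^2) * ((π*((j:ℝ)+1))^2 / ((π*((j:ℝ)+1))^2 + s^2))))
            * (s * ∏ j ∈ Finset.range n, (1 + s^2/(π^2*((j:ℝ)+1)^2)))
          = (α*s) * ∏ j ∈ Finset.range n,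
              ((α^2 + (1-α^2) * ((π*((j:ℝ)+1))^2 / ((π*((j:ℝ)+1))^2 + s^2)))
                * (1 + s^2/(π^2*((j:ℝ)+1)^2))) := by
            rw [Finset.prod_mul_distrib]; ring
        _ = (α*s) * ∏ j ∈ Finset.range n, (1 + (α*s)^2/(π^2*((j:ℝ)+1)^2)) := by
            rw [Finset.prod_congr rfl fun j _ => hfac j]
    rw [funext key]
    exact hN.div hD hsinh_ne

lemma pdk_congr {f g : ℝ → ℝ} (h : ∀ s, f s = g s) (hf : PDK f) : PDK g :=
  (funext h : f = g) ▸ hf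

lemma pdk_G (α : ℝ) (hα : α ∈ Set.Ioo (0:ℝ) 1) (n : ℕ) :
    PDK (fun s => ∏ j ∈ Finset.range n,
        (α^2 + (1-α^2) * ((π*((j:ℝ)+1))^2 / ((π*((j:ℝ)+1))^2 + s^2))))
    ∧ ∀ s : ℝ, (∏ j ∈ Finset.range n,
        (α^2 + (1-α^2) * ((π*((j:ℝ)+1))^2 / ((π*((j:ℝ)+1))^2 + (-s)^2)))) =
      ∏ j ∈ Finset.range n,
        (α^2 + (1-α^2) * ((π*((j:ℝ)+1))^2 / ((π*((j:ℝ)+1))^2 + s^2))) := by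
  obtain ⟨hα0, hα1⟩ := hα
  induction n with
  | zero => exact ⟨by simpa using pdk_const zero_le_one, fun s => by simp⟩
  | succ n ih =>
    obtain ⟨ihp, ihe⟩ := ih
    have hfac : PDK (fun s => α^2 + (1-α^2) * ((π*((n:ℝ)+1))^2 / ((π*((n:ℝ)+1))^2 + s^2))) := by
      refine pdk_add (pdk_const (by positivity)) (pdk_smul (by nlinarith) ?_)
      exact pdk_cauchy (by positivity)
    constructor
    · refine pdk_congr (f := fun s => (∏ j ∈ Finset.range n,
        (α^2 + (1-α^2) * ((π*((j:ℝ)+1))^2 / ((π*((j:ℝ)+1))^2 + s^2)))) *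
        (α^2 + (1-α^2) * ((π*((n:ℝ)+1))^2 / ((π*((n:ℝ)+1))^2 + s^2))))
        (fun s => (Finset.prod_range_succ _ n).symm) ?_
      exact pdk_mul ihp (fun s => ihe s) hfac
    · intro s
      rw [Finset.prod_range_succ, Finset.prod_range_succ, ihe s, neg_sq]

lemma pdk_h (α : ℝ) (hα : α ∈ Set.Ioo (0:ℝ) 1) :
    PDK (fun t => if t = 0 then α else Real.sinh (α * t) / Real.sinh t) := by
  refine pdk_limit (F := fun n s => α * ∏ j ∈ Finset.range n,
      (α^2 + (1-α^2) * ((π*((j:ℝ)+1))^2 / ((π*((j:ℝ)+1))^2 + s^2)))) ?_ ?_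
  · exact fun n => pdk_smul hα.1.le (pdk_G α hα n).1
  · exact fun s => tendsto_ratio α hα s

lemma h_even (α : ℝ) (s : ℝ) :
    (if -s = 0 then α else Real.sinh (α * -s) / Real.sinh (-s))
      = if s = 0 then α else Real.sinh (α * s) / Real.sinh s := by
  by_cases hs : s = 0
  · subst hs; norm_num
  · rw [if_neg (by simpa using hs), if_neg hs, mul_neg, Real.sinh_neg, Real.sinh_neg,
      neg_div_neg_eq]

lemma h_cont (α : ℝ) (hα : α ∈ Set.Ioo (0:ℝ) 1) :
    Continuous (fun t => if t = 0 then α else Real.sinh (α * t) / Real.sinh t) := by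
  obtain ⟨hα0, hα1⟩ := hα
  rw [continuous_iff_continuousAt]
  intro t₀
  by_cases ht : t₀ = 0
  · subst ht
    have h1 : Tendsto (fun s : ℝ => Real.sinh s / s) (nhdsWithin 0 {(0:ℝ)}ᶜ) (nhds 1) := by
      have := hasDerivAt_iff_tendsto_slope.mp (Real.hasDerivAt_sinh 0)
      rw [Real.cosh_zero] at this
      refine this.congr fun s => ?_
      simp [slope_def_field, Real.sinh_zero]
    have hmap : Tendsto (fun s : ℝ => α * s) (nhdsWithin 0 {(0:ℝ)}ᶜ) (nhdsWithin 0 {(0:ℝ)}ᶜ) := by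
      refine tendsto_nhdsWithin_iff.mpr ⟨?_, ?_⟩
      · simpa using ((continuous_const_mul α).tendsto (0:ℝ)).mono_left
          nhdsWithin_le_nhds
      · filter_upwards [self_mem_nhdsWithin] with s hs
        simpa using mul_ne_zero (ne_of_gt hα0) hs
    have h2 : Tendsto (fun s : ℝ => Real.sinh (α*s)/(α*s)) (nhdsWithin 0 {(0:ℝ)}ᶜ) (nhds 1) :=
      h1.comp hmap
    have h3 : Tendsto (fun s : ℝ => α * (Real.sinh (α*s)/(α*s)) / (Real.sinh s / s))
        (nhdsWithin 0 {(0:ℝ)}ᶜ) (nhds α) := by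
      have := (h2.const_mul α).div h1 one_ne_zero
      simpa [Pi.div_def] using this
    have heq : ∀ᶠ s in nhdsWithin (0:ℝ) {(0:ℝ)}ᶜ,
        α * (Real.sinh (α*s)/(α*s)) / (Real.sinh s / s)
          = (if s = 0 then α else Real.sinh (α*s)/Real.sinh s) := by
      filter_upwards [self_mem_nhdsWithin] with s hs
      have hs0 : s ≠ 0 := hs
      have hsinh : Real.sinh s ≠ 0 := by rwa [Real.sinh_ne_zero]
      have hα0' : α ≠ 0 := ne_of_gt hα0
      rw [if_neg hs0]
      field_simp
    have h4 := h3.congr' heq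
    have hval : (if (0:ℝ) = 0 then α else Real.sinh (α*0)/Real.sinh 0) = α := if_pos rfl
    rw [ContinuousAt, hval, ← nhdsNE_sup_pure (0:ℝ), tendsto_sup]
    refine ⟨h4, ?_⟩
    have := tendsto_pure_nhds (fun t => if t = 0 then α else Real.sinh (α*t)/Real.sinh t) 0
    rwa [hval] at this
  · have hne : Real.sinh t₀ ≠ 0 := by rwa [Real.sinh_ne_zero]
    have hc : ContinuousAt (fun s => Real.sinh (α*s)/Real.sinh s) t₀ :=
      ContinuousAt.div
        ((Real.continuous_sinh.comp (continuous_const.mul continuous_id)).continuousAt)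
        Real.continuous_sinh.continuousAt hne
    refine hc.congr ?_
    filter_upwards [isOpen_compl_singleton.mem_nhds ht] with s hs
    rw [if_neg (by simpa using hs)]

theorem main (α : ℝ) (hα : α ∈ Set.Ioo (0 : ℝ) 1) (d : ℕ) (t : Fin d → ℝ) :
    (Matrix.of fun i j =>
      (fun t => if t = 0 then α else Real.sinh (α * t) / Real.sinh t) (t i - t j)).PosSemidef := by
  set h : ℝ → ℝ := fun t => if t = 0 then α else Real.sinh (α * t) / Real.sinh t with hh
  have hpdk : PDK h := pdk_h α hα
  refine Matrix.posSemidef_iff_dotProduct_mulVec.mpr ⟨?_, ?_⟩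
  · ext i j
    simp only [Matrix.conjTranspose_apply, Matrix.of_apply, star_trivial]
    show h (t j - t i) = h (t i - t j)
    calc h (t j - t i) = h (-(t i - t j)) := by rw [neg_sub]
      _ = h (t i - t j) := h_even α (t i - t j)
  · intro y
    have : dotProduct (star y) ((Matrix.of fun i j => h (t i - t j)).mulVec y)
        = ∑ i, ∑ j, y i * y j * h (t i - t j) := by
      simp only [dotProduct, Matrix.mulVec, star_trivial, Matrix.of_apply,
        Finset.mul_sum]
      exact Finset.sum_congr rfl fun i _ => Finset.sum_congr rfl fun j _ => by ring
    rw [this]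
    exact hpdk d t y

end Stmt7Aux

theorem stmt_7 (α : ℝ) (hα : α ∈ Set.Ioo (0 : ℝ) 1) :
    IsPosDefFn (fun t => if t = 0 then α else Real.sinh (α * t) / Real.sinh t) :=
  ⟨Stmt7Aux.h_cont α hα, fun d t => Stmt7Aux.main α hα d t⟩
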